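/- Let σ be a ring automorphism of the field ℂ of complex numbers such that σ(λ · conj(λ)) = σ(λ) · conj(σ(λ)) for every λ ∈ ℂ (i.e. σ is compatible with the squared absolute value). Then σ maps ℝ into ℝ, and consequently σ is either the identity of ℂ or complex conjugation. -/

import Mathlib

/-- Let `σ` be a ring automorphism of `ℂ` compatible with the squared
absolute value, i.e. `σ (λ * conj λ) = σ λ * conj (σ λ)` for all `λ`.  Then `σ` maps `ℝ`
into `ℝ`, and consequently `σ` is the identity or complex conjugation. -/
theorem stmt_10 (σ : ℂ ≃+* ℂ)
    (hσ : ∀ z : ℂ, σ (z * (starRingEnd ℂ) z) = σ z * (starRingEnd ℂ) (σ z)) :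
    (∀ r : ℝ, ∃ s : ℝ, σ (r : ℂ) = (s : ℂ)) ∧
    ((∀ z : ℂ, σ z = z) ∨ (∀ z : ℂ, σ z = (starRingEnd ℂ) z)) := by
  have hreal : ∀ r : ℝ, ∃ s : ℝ, σ (r : ℂ) = (s : ℂ) := by
    intro r
    have h := hσ (r : ℂ)
    rw [Complex.conj_ofReal, map_mul] at h
    rcases mul_eq_zero.mp (by linear_combination h : σ r * (σ r - (starRingEnd ℂ) (σ r)) = 0) with h0 | h0
    · exact ⟨0, by simp [h0]⟩
    · have : (starRingEnd ℂ) (σ r) = σ r := by linear_combination -h0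
      exact ⟨(σ r).re, (Complex.conj_eq_iff_re.mp this).symm⟩
  have key : ∀ r : ℝ, σ (r : ℂ) = (((σ (r : ℂ)).re : ℝ) : ℂ) := by
    intro r
    obtain ⟨s, hs⟩ := hreal r
    rw [hs]; simp
  let τ : ℝ →+* ℝ :=
    { toFun := fun r => (σ (r : ℂ)).re
      map_one' := by simp
      map_zero' := by simp
      map_mul' := fun x y => by
        have : (((σ ((x * y : ℝ) : ℂ)).re : ℝ) : ℂ) = (((σ (x : ℂ)).re : ℝ) : ℂ) * (((σ (y : ℂ)).re : ℝ) : ℂ) := by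
          rw [← key, ← key, ← key, Complex.ofReal_mul, map_mul]
        exact_mod_cast this
      map_add' := fun x y => by
        have : (((σ ((x + y : ℝ) : ℂ)).re : ℝ) : ℂ) = (((σ (x : ℂ)).re : ℝ) : ℂ) + (((σ (y : ℂ)).re : ℝ) : ℂ) := by
          rw [← key, ← key, ← key, Complex.ofReal_add, map_add]
        exact_mod_cast this }
  have hτ : τ = RingHom.id ℝ := Subsingleton.elim _ _
  have hfix : ∀ r : ℝ, σ (r : ℂ) = (r : ℂ) := by
    intro r
    rw [key r]
    have : τ r = r := by rw [hτ]; rfl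
    exact congrArg (fun x : ℝ => (x : ℂ)) this
  have hI2 : σ Complex.I * σ Complex.I = -1 := by
    rw [← map_mul, Complex.I_mul_I]
    simp
  have hIcases : σ Complex.I = Complex.I ∨ σ Complex.I = -Complex.I := by
    rcases mul_eq_zero.mp (by linear_combination hI2 - Complex.I_sq : (σ Complex.I - Complex.I) * (σ Complex.I + Complex.I) = 0) with h | h
    · left; linear_combination h
    · right; linear_combination h
  refine ⟨hreal, ?_⟩
  rcases hIcases with hI | hI
  · left
    intro z
    calc σ z = σ ((z.re : ℂ) + (z.im : ℂ) * Complex.I) := by rw [Complex.re_add_im]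
      _ = σ (z.re : ℂ) + σ (z.im : ℂ) * σ Complex.I := by rw [map_add, map_mul]
      _ = (z.re : ℂ) + (z.im : ℂ) * Complex.I := by rw [hfix, hfix, hI]
      _ = z := Complex.re_add_im z
  · right
    intro z
    calc σ z = σ ((z.re : ℂ) + (z.im : ℂ) * Complex.I) := by rw [Complex.re_add_im]
      _ = σ (z.re : ℂ) + σ (z.im : ℂ) * σ Complex.I := by rw [map_add, map_mul]
      _ = (z.re : ℂ) + (z.im : ℂ) * (-Complex.I) := by rw [hfix, hfix, hI]
      _ = (starRingEnd ℂ) z := by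
        rw [show (starRingEnd ℂ) z = (z.re : ℂ) - (z.im : ℂ) * Complex.I by
          simpa [sub_eq_add_neg] using (Complex.re_add_im ((starRingEnd ℂ) z)).symm]
        ring
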